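/- Under the balanced random effects model, the mean squared prediction error matrix of the BLUP θ̂^B = (1-B)y + B P_X y equals V((1-B)I_m + B P_X), i.e., E[(θ̂^B - θ)(θ̂^B - θ)^T] = V{(1-B)I_m + B P_X}. -/

import Mathlib

open Matrix MeasureTheory

noncomputable def projX {m p : ℕ} (X : Matrix (Fin m) (Fin p) ℝ) : Matrix (Fin m) (Fin m) ℝ :=
  X * (Xᵀ * X)⁻¹ * Xᵀ

lemma integrable_mul_of_memL2 {Ω : Type*} [MeasurableSpace Ω] {P : Measure Ω} {f g : Ω → ℝ}
    (hf : MemLp f 2 P) (hg : MemLp g 2 P) : Integrable (fun ω => f ω * g ω) P := by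
  have h : MemLp (f • g) 1 P := hg.smul hf
  rw [memLp_one_iff_integrable] at h
  exact h

lemma isUnit_conj_transpose_mul_self {m p : ℕ} (X : Matrix (Fin m) (Fin p) ℝ)
    (hX : X.rank = p) : IsUnit (Xᵀ * X) := by
  have hr : (Xᵀ * X).rank = Fintype.card (Fin p) := by
    rw [Matrix.rank_transpose_mul_self, hX, Fintype.card_fin]
  rw [← Matrix.mulVec_surjective_iff_isUnit]
  rw [Matrix.rank] at hr
  have htop : LinearMap.range (Xᵀ * X).mulVecLin = ⊤ := by
    apply Submodule.eq_top_of_finrank_eq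
    rw [hr, Module.finrank_pi]
  intro v
  have : v ∈ LinearMap.range (Xᵀ * X).mulVecLin := htop ▸ Submodule.mem_top
  obtain ⟨w, hw⟩ := this
  exact ⟨w, hw⟩

/-- Under the balanced random effects model `y = Xβ + u + e`,
`u ~ (0, A I_m)`, `e ~ (0, V I_m)` uncorrelated, the mean squared prediction error matrix
of the BLUP `θ̂^B = (1-B) y + B P_X y` (with `B = V/(V+A)`) equals `V((1-B) I_m + B P_X)`. -/
theorem statement2 {m p : ℕ} (hpm : p < m) (X : Matrix (Fin m) (Fin p) ℝ) (hX : X.rank = p)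
    (A V : ℝ) (hA : 0 < A) (hV : 0 < V)
    {Ω : Type*} [MeasurableSpace Ω] (P : Measure Ω) [IsProbabilityMeasure P]
    (u e : Ω → Fin m → ℝ) (β : Fin p → ℝ)
    (hu2 : ∀ i, MemLp (fun ω => u ω i) 2 P)
    (he2 : ∀ i, MemLp (fun ω => e ω i) 2 P)
    (hu0 : ∀ i, ∫ ω, u ω i ∂P = 0)
    (he0 : ∀ i, ∫ ω, e ω i ∂P = 0)
    (hcovu : ∀ i j, ∫ ω, u ω i * u ω j ∂P = if i = j then A else 0)
    (hcove : ∀ i j, ∫ ω, e ω i * e ω j ∂P = if i = j then V else 0)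
    (hcovue : ∀ i j, ∫ ω, u ω i * e ω j ∂P = 0)
    (θ : Ω → Fin m → ℝ) (hθ : ∀ ω, θ ω = X.mulVec β + u ω)
    (y : Ω → Fin m → ℝ) (hy : ∀ ω, y ω = θ ω + e ω)
    (B : ℝ) (hB : B = V / (V + A))
    (θhat : Ω → Fin m → ℝ)
    (hθhat : ∀ ω, θhat ω =
      ((1 - B) • (1 : Matrix (Fin m) (Fin m) ℝ) + B • projX X).mulVec (y ω)) :
    ∀ i j, ∫ ω, (θhat ω i - θ ω i) * (θhat ω j - θ ω j) ∂P
      = (V • ((1 - B) • (1 : Matrix (Fin m) (Fin m) ℝ) + B • projX X)) i j := by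
  have hVA : V + A ≠ 0 := by positivity
  set Q : Matrix (Fin m) (Fin m) ℝ := projX X with hQ
  set M : Matrix (Fin m) (Fin m) ℝ := (1 - B) • (1 : Matrix (Fin m) (Fin m) ℝ) + B • Q with hM
  -- invertibility of XᵀX
  have hunit : IsUnit (Xᵀ * X) := isUnit_conj_transpose_mul_self X hX
  have hdet : IsUnit (Xᵀ * X).det := (Matrix.isUnit_iff_isUnit_det _).mp hunit
  -- basic facts on Q
  have hQX : Q * X = X := by
    rw [hQ, projX, Matrix.mul_assoc (X * (Xᵀ * X)⁻¹), Matrix.mul_assoc X,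
      Matrix.nonsing_inv_mul _ hdet, Matrix.mul_one]
  have hQsym : Qᵀ = Q := by
    rw [hQ, projX]
    rw [Matrix.transpose_mul, Matrix.transpose_mul, Matrix.transpose_transpose,
      Matrix.transpose_nonsing_inv, Matrix.transpose_mul, Matrix.transpose_transpose,
      Matrix.mul_assoc]
  have hQQ : Q * Q = Q := by
    have h := Matrix.nonsing_inv_mul _ hdet
    rw [hQ, projX]
    calc X * (Xᵀ * X)⁻¹ * Xᵀ * (X * (Xᵀ * X)⁻¹ * Xᵀ)
        = X * ((Xᵀ * X)⁻¹ * (Xᵀ * X) * ((Xᵀ * X)⁻¹ * Xᵀ)) := by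
          simp only [Matrix.mul_assoc]
      _ = X * (Xᵀ * X)⁻¹ * Xᵀ := by rw [h, Matrix.one_mul, ← Matrix.mul_assoc]
  -- facts on M
  have hMT : Mᵀ = M := by
    rw [hM, Matrix.transpose_add, Matrix.transpose_smul, Matrix.transpose_smul,
      Matrix.transpose_one, hQsym]
  have hMX : M * X = X := by
    rw [hM, Matrix.add_mul, Matrix.smul_mul, Matrix.smul_mul, Matrix.one_mul, hQX]
    module
  have hC : M - 1 = B • (Q - 1) := by
    rw [hM, smul_sub, sub_smul, one_smul]; abel
  have hCC : (M - 1) * (M - 1) = (B * B) • ((1 : Matrix (Fin m) (Fin m) ℝ) - Q) := by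
    rw [hC, Matrix.smul_mul, Matrix.mul_smul, smul_smul]
    congr 1
    simp only [Matrix.sub_mul, Matrix.mul_sub, hQQ, Matrix.mul_one, Matrix.one_mul]
    abel
  have hMQ : M * Q = Q := by
    rw [hM, Matrix.add_mul, Matrix.smul_mul, Matrix.smul_mul, Matrix.one_mul, hQQ]
    module
  have hMM : M * M = (1 - B) • M + B • Q := by
    conv_lhs => rw [hM]
    rw [Matrix.mul_add, Matrix.mul_smul, Matrix.mul_smul, Matrix.mul_one, hMQ, ← hM]
  -- the key matrix identity
  have hkey : A • ((M - 1) * (M - 1)) + V • (M * M) = V • M := by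
    rw [hCC, hMM, hM]
    match_scalars <;> (subst hB; field_simp; ring)
  -- combined noise vector
  set z : Ω → (Fin m ⊕ Fin m) → ℝ := fun ω => Sum.elim (u ω) (e ω) with hz
  set K : Fin m → (Fin m ⊕ Fin m) → ℝ :=
    fun i => Sum.elim (fun k => (M - 1) i k) (fun k => M i k) with hK
  have hz2 : ∀ s, MemLp (fun ω => z ω s) 2 P := by
    rintro (k | k)
    · exact hu2 k
    · exact he2 k
  have hint : ∀ s t, Integrable (fun ω => z ω s * z ω t) P :=
    fun s t => integrable_mul_of_memL2 (hz2 s) (hz2 t)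
  have hcovz : ∀ s t, ∫ ω, z ω s * z ω t ∂P =
      Sum.elim (fun k => Sum.elim (fun l => if k = l then A else 0) (fun _ => 0))
        (fun k => Sum.elim (fun _ => 0) (fun l => if k = l then V else 0)) s t := by
    rintro (k | k) (l | l)
    · exact hcovu k l
    · exact hcovue k l
    · show ∫ ω, e ω k * u ω l ∂P = 0
      have : (fun ω => e ω k * u ω l) = fun ω => u ω l * e ω k := by ext ω; ring
      rw [this]; exact hcovue l k
    · exact hcove k l
  -- representation of the prediction error
  have hf : ∀ ω i, θhat ω i - θ ω i = ∑ s, K i s * z ω s := by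
    intro ω i
    have h1 : θhat ω = X.mulVec β + M.mulVec (u ω) + M.mulVec (e ω) := by
      rw [hθhat ω, hy ω, hθ ω, Matrix.mulVec_add, Matrix.mulVec_add,
        Matrix.mulVec_mulVec, hMX]
    have h2 : ∑ s, K i s * z ω s
        = ∑ k, (M - 1) i k * u ω k + ∑ k, M i k * e ω k := by
      rw [Fintype.sum_sum_type]
      simp only [hK, hz, Sum.elim_inl, Sum.elim_inr]
    rw [h2, hθ ω, h1]
    have h3 : ∑ k, (M - 1) i k * u ω k = ∑ k, M i k * u ω k - u ω i := by
      simp [Matrix.sub_apply, sub_mul, Finset.sum_sub_distrib, Matrix.one_apply,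
        ite_mul, Finset.sum_ite_eq]
    rw [h3]
    simp only [Pi.add_apply, Matrix.mulVec, dotProduct]
    ring
  intro i j
  have hterm : ∀ ω, (θhat ω i - θ ω i) * (θhat ω j - θ ω j)
      = ∑ s, ∑ t, (K i s * K j t) * (z ω s * z ω t) := by
    intro ω
    rw [hf ω i, hf ω j, Finset.sum_mul_sum]
    apply Finset.sum_congr rfl; intro s _
    apply Finset.sum_congr rfl; intro t _
    ring
  have hint2 : ∀ s t, Integrable (fun ω => (K i s * K j t) * (z ω s * z ω t)) P :=
    fun s t => (hint s t).const_mul _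
  calc ∫ ω, (θhat ω i - θ ω i) * (θhat ω j - θ ω j) ∂P
      = ∫ ω, ∑ s, ∑ t, (K i s * K j t) * (z ω s * z ω t) ∂P := by
        exact integral_congr_ae (ae_of_all _ fun ω => hterm ω)
    _ = ∑ s, ∑ t, (K i s * K j t) * ∫ ω, z ω s * z ω t ∂P := by
        rw [integral_finset_sum _ (fun s _ => (integrable_finset_sum _ (fun t _ => hint2 s t)))]
        apply Finset.sum_congr rfl; intro s _
        rw [integral_finset_sum _ (fun t _ => hint2 s t)]
        apply Finset.sum_congr rfl; intro t _
        rw [integral_const_mul]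
    _ = A * ∑ k, (M - 1) i k * (M - 1) j k + V * ∑ k, M i k * M j k := by
        simp only [hcovz]
        rw [Fintype.sum_sum_type]
        congr 1
        · rw [Finset.mul_sum]
          apply Finset.sum_congr rfl; intro k _
          rw [Fintype.sum_sum_type]
          simp [hK, Finset.mul_sum, mul_ite, Finset.sum_ite_eq]
          ring
        · rw [Finset.mul_sum]
          apply Finset.sum_congr rfl; intro k _
          rw [Fintype.sum_sum_type]
          simp [hK, Finset.mul_sum, mul_ite, Finset.sum_ite_eq]
          ring
    _ = (A • ((M - 1) * (M - 1)) + V • (M * M)) i j := by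
        have hsym : (M - 1)ᵀ = M - 1 := by
          rw [Matrix.transpose_sub, hMT, Matrix.transpose_one]
        have e1 : ((M - 1) * (M - 1)) i j = ∑ k, (M - 1) i k * (M - 1) j k := by
          rw [Matrix.mul_apply]
          refine Finset.sum_congr rfl fun k _ => ?_
          rw [← Matrix.transpose_apply (M - 1) j k, hsym]
        have e2 : (M * M) i j = ∑ k, M i k * M j k := by
          rw [Matrix.mul_apply]
          refine Finset.sum_congr rfl fun k _ => ?_
          rw [← Matrix.transpose_apply M j k, hMT]
        simp [e1, e2]
    _ = (V • ((1 - B) • (1 : Matrix (Fin m) (Fin m) ℝ) + B • projX X)) i j := by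
        rw [hkey, hM]
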